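/- Let C be a small commutative C*-category and A, B objects of C. In B^C_{AB}, the set of classes of restrictions that vanish identically on C_{AB} is either empty or a single point, and it is closed; consequently X^C_{AB} is an open subset of B^C_{AB} and is a locally compact Hausdorff completely regular topological space. If moreover some ω ∈ [C;ℂ] vanishes identically on C_{AB}, then B^C_{AB} is homeomorphic to the one-point (Alexandroff) compactification of X^C_{AB}. -/

import Mathlib

universe u v

/-- A small C*-category: objects `O`, hom-spaces `Hom A B` (the morphisms `C_{AB} = Hom(B,A)`),
each a complex Banach space, with bilinear submultiplicative composition and a conjugate-linear
involution satisfying the C*-identity and positivity of `x* ∘ x`. -/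
class CStarCategory (O : Type u) (Hom : O → O → Type v)
    [∀ A B, NormedAddCommGroup (Hom A B)]
    [∀ A B, NormedSpace ℂ (Hom A B)] where
  comp : ∀ {A B C : O}, Hom A B → Hom B C → Hom A C
  ident : ∀ A : O, Hom A A
  star : ∀ {A B : O}, Hom A B → Hom B A
  complete : ∀ A B : O, CompleteSpace (Hom A B)
  comp_assoc : ∀ {A B C D : O} (x : Hom A B) (y : Hom B C) (z : Hom C D),
    comp (comp x y) z = comp x (comp y z)
  ident_comp : ∀ {A B : O} (x : Hom A B), comp (ident A) x = x
  comp_ident : ∀ {A B : O} (x : Hom A B), comp x (ident B) = x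
  add_comp : ∀ {A B C : O} (x x' : Hom A B) (y : Hom B C),
    comp (x + x') y = comp x y + comp x' y
  comp_add : ∀ {A B C : O} (x : Hom A B) (y y' : Hom B C),
    comp x (y + y') = comp x y + comp x y'
  smul_comp : ∀ {A B C : O} (c : ℂ) (x : Hom A B) (y : Hom B C),
    comp (c • x) y = c • comp x y
  comp_smul : ∀ {A B C : O} (c : ℂ) (x : Hom A B) (y : Hom B C),
    comp x (c • y) = c • comp x y
  norm_comp_le : ∀ {A B C : O} (x : Hom A B) (y : Hom B C), ‖comp x y‖ ≤ ‖x‖ * ‖y‖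
  star_star : ∀ {A B : O} (x : Hom A B), star (star x) = x
  star_add : ∀ {A B : O} (x y : Hom A B), star (x + y) = star x + star y
  star_smul : ∀ {A B : O} (c : ℂ) (x : Hom A B),
    star (c • x) = (starRingEnd ℂ c) • star x
  star_comp : ∀ {A B C : O} (x : Hom A B) (y : Hom B C),
    star (comp x y) = comp (star y) (star x)
  star_ident : ∀ A : O, star (ident A) = ident A
  norm_star_comp_self : ∀ {A B : O} (x : Hom A B), ‖comp (star x) x‖ = ‖x‖ ^ 2
  star_comp_self_positive : ∀ {A B : O} (x : Hom A B),
    ∃ b : Hom B B, star b = b ∧ comp (star x) x = comp b b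

/-- A `*`-functor from a small C*-category to `ℂ`: ℂ-linear on every hom-space,
multiplicative on composition, unital on identities and compatible with the involutions. -/
structure StarFunctor (O : Type u) (Hom : O → O → Type v)
    [∀ A B, NormedAddCommGroup (Hom A B)] [∀ A B, NormedSpace ℂ (Hom A B)]
    [CStarCategory O Hom] where
  toFun : ∀ {A B : O}, Hom A B → ℂ
  map_add : ∀ {A B : O} (x y : Hom A B), toFun (x + y) = toFun x + toFun y
  map_smul : ∀ {A B : O} (c : ℂ) (x : Hom A B), toFun (c • x) = c * toFun x
  map_comp : ∀ {A B C : O} (x : Hom A B) (y : Hom B C),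
    toFun (CStarCategory.comp x y) = toFun x * toFun y
  map_ident : ∀ A : O, toFun (CStarCategory.ident A) = 1
  map_star : ∀ {A B : O} (x : Hom A B),
    toFun (CStarCategory.star x) = starRingEnd ℂ (toFun x)

/-- A C*-category is commutative if all diagonal hom-sets are commutative C*-algebras. -/
def CStarCategory.IsCommutative (O : Type u) (Hom : O → O → Type v)
    [∀ A B, NormedAddCommGroup (Hom A B)] [∀ A B, NormedSpace ℂ (Hom A B)]
    [CStarCategory O Hom] : Prop :=
  ∀ (A : O) (x y : Hom A A), CStarCategory.comp x y = CStarCategory.comp y x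

variable {O : Type u} {Hom : O → O → Type v}
    [∀ A B, NormedAddCommGroup (Hom A B)] [∀ A B, NormedSpace ℂ (Hom A B)]
    [CStarCategory O Hom]

/-- `[C;ℂ]_{AB}`: the set of restrictions of `*`-functors `C → ℂ` to the hom-space `C_{AB}`,
with the subspace topology of pointwise convergence (the weak-*-topology). -/
def StarFunctor.restrictionSet (O : Type u) (Hom : O → O → Type v)
    [∀ A B, NormedAddCommGroup (Hom A B)] [∀ A B, NormedSpace ℂ (Hom A B)]
    [CStarCategory O Hom] (A B : O) : Set (Hom A B → ℂ) :=
  Set.range fun ω : StarFunctor O Hom => fun x : Hom A B => ω.toFun x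

/-- The phase equivalence on `[C;ℂ]_{AB}`: `φ ∼ ψ` iff `ψ = u·φ` for a unimodular `u ∈ ℂ`. -/
def StarFunctor.phaseRel (O : Type u) (Hom : O → O → Type v)
    [∀ A B, NormedAddCommGroup (Hom A B)] [∀ A B, NormedSpace ℂ (Hom A B)]
    [CStarCategory O Hom] (A B : O)
    (φ ψ : StarFunctor.restrictionSet O Hom A B) : Prop :=
  ∃ u : ℂ, ‖u‖ = 1 ∧ ∀ x : Hom A B, (ψ : Hom A B → ℂ) x = u * (φ : Hom A B → ℂ) x

/-- `B^C_{AB}`: the quotient of `[C;ℂ]_{AB}` by the phase equivalence, with the quotient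
topology. -/
abbrev StarFunctor.BSpace (O : Type u) (Hom : O → O → Type v)
    [∀ A B, NormedAddCommGroup (Hom A B)] [∀ A B, NormedSpace ℂ (Hom A B)]
    [CStarCategory O Hom] (A B : O) :=
  Quot (StarFunctor.phaseRel O Hom A B)

/-- The set of classes `[ω]_{AB} ∈ B^C_{AB}` of restrictions vanishing identically on
`C_{AB}`; its complement is `X^C_{AB}`. -/
def StarFunctor.zeroClasses (O : Type u) (Hom : O → O → Type v)
    [∀ A B, NormedAddCommGroup (Hom A B)] [∀ A B, NormedSpace ℂ (Hom A B)]
    [CStarCategory O Hom] (A B : O) : Set (StarFunctor.BSpace O Hom A B) :=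
  {q | ∃ φ : StarFunctor.restrictionSet O Hom A B,
    Quot.mk (StarFunctor.phaseRel O Hom A B) φ = q ∧ ∀ x : Hom A B, (φ : Hom A B → ℂ) x = 0}

section Aux

open CStarCategory

/-- `|ω(x)| ≤ ‖x‖` for any `*`-functor. -/
theorem StarFunctor.abs_toFun_le_norm (ω : StarFunctor O Hom) {A B : O} (x : Hom A B) :
    ‖ω.toFun x‖ ≤ ‖x‖ := by
  letI ring : Ring (Hom B B) :=
    { (inferInstance : AddCommGroup (Hom B B)) with
      mul := CStarCategory.comp
      left_distrib := fun a b c => CStarCategory.comp_add a b c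
      right_distrib := fun a b c => CStarCategory.add_comp a b c
      zero_mul := fun a => by
        show CStarCategory.comp 0 a = 0
        simpa using CStarCategory.smul_comp (0 : ℂ) (0 : Hom B B) a
      mul_zero := fun a => by
        show CStarCategory.comp a 0 = 0
        simpa using CStarCategory.comp_smul (0 : ℂ) a (0 : Hom B B)
      mul_assoc := CStarCategory.comp_assoc
      one := CStarCategory.ident B
      one_mul := CStarCategory.ident_comp
      mul_one := CStarCategory.comp_ident }
  letI : NormedRing (Hom B B) :=
    { ring, (inferInstance : NormedAddCommGroup (Hom B B)) with
      dist_eq := NormedAddCommGroup.dist_eq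
      norm_mul_le := fun a b => CStarCategory.norm_comp_le a b }
  letI : CompleteSpace (Hom B B) := CStarCategory.complete B B
  letI alg : Algebra ℂ (Hom B B) :=
    Algebra.ofModule (fun c a b => CStarCategory.smul_comp c a b)
      (fun c a b => CStarCategory.comp_smul c a b)
  letI : NormedAlgebra ℂ (Hom B B) := { alg with norm_smul_le := fun c a => norm_smul_le c a }
  have hzero : ω.toFun (0 : Hom B B) = 0 := by
    simpa using ω.map_smul 0 (0 : Hom B B)
  have hι : (CStarCategory.ident B : Hom B B) ≠ 0 := by
    intro h
    have h1 := ω.map_ident B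
    rw [h, hzero] at h1
    exact one_ne_zero h1.symm
  have hnorm1 : ‖(1 : Hom B B)‖ = 1 := by
    have h2 := CStarCategory.norm_star_comp_self (CStarCategory.ident B : Hom B B)
    rw [CStarCategory.star_ident, CStarCategory.comp_ident] at h2
    have hpos : 0 < ‖(CStarCategory.ident B : Hom B B)‖ := norm_pos_iff.mpr hι
    have h3 : ‖(CStarCategory.ident B : Hom B B)‖ * ‖(CStarCategory.ident B : Hom B B)‖
        = ‖(CStarCategory.ident B : Hom B B)‖ * 1 := by
      rw [mul_one, ← sq]; exact h2.symm
    exact mul_left_cancel₀ hpos.ne' h3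
  letI : NormOneClass (Hom B B) := ⟨hnorm1⟩
  let φ : (Hom B B) →ₐ[ℂ] ℂ :=
    { toFun := fun a => ω.toFun a
      map_one' := ω.map_ident B
      map_mul' := fun a b => ω.map_comp a b
      map_zero' := hzero
      map_add' := fun a b => ω.map_add a b
      commutes' := fun c => by
        show ω.toFun (c • (1 : Hom B B)) = _
        have h1 : ω.toFun (1 : Hom B B) = 1 := ω.map_ident B
        rw [ω.map_smul c (1 : Hom B B), h1]
        simp }
  have hmem := AlgHom.apply_mem_spectrum φ (CStarCategory.comp (CStarCategory.star x) x)
  have hb := spectrum.norm_le_norm_of_mem hmem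
  rw [CStarCategory.norm_star_comp_self] at hb
  have heq : φ (CStarCategory.comp (CStarCategory.star x) x)
      = starRingEnd ℂ (ω.toFun x) * ω.toFun x := by
    show ω.toFun _ = _
    rw [ω.map_comp, ω.map_star]
  rw [heq] at hb
  have h3 : ‖ω.toFun x‖ ^ 2 ≤ ‖x‖ ^ 2 := by
    calc ‖ω.toFun x‖ ^ 2
        = ‖starRingEnd ℂ (ω.toFun x) * ω.toFun x‖ := by
          rw [norm_mul, Complex.norm_conj, sq]
      _ ≤ ‖x‖ ^ 2 := hb
  nlinarith [norm_nonneg (ω.toFun x), norm_nonneg x]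

end Aux

section Aux2

/-- The range of the total evaluation map of all `*`-functors is compact. -/
theorem StarFunctor.isCompact_range_total :
    IsCompact (Set.range (fun ω : StarFunctor O Hom =>
      fun p : Σ A : O, Σ B : O, Hom A B => ω.toFun p.2.2)) := by
  apply IsCompact.of_isClosed_subset
    (isCompact_univ_pi (fun p : Σ A : O, Σ B : O, Hom A B =>
      isCompact_closedBall (0 : ℂ) ‖p.2.2‖))
  · -- closedness
    have hrange : Set.range (fun ω : StarFunctor O Hom =>
        fun p : Σ A : O, Σ B : O, Hom A B => ω.toFun p.2.2) =
        (⋂ (A : O) (B : O) (x : Hom A B) (y : Hom A B),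
          {f : (Σ A : O, Σ B : O, Hom A B) → ℂ |
            f ⟨A, B, x + y⟩ = f ⟨A, B, x⟩ + f ⟨A, B, y⟩}) ∩
        ((⋂ (A : O) (B : O) (c : ℂ) (x : Hom A B),
          {f : (Σ A : O, Σ B : O, Hom A B) → ℂ | f ⟨A, B, c • x⟩ = c * f ⟨A, B, x⟩}) ∩
        ((⋂ (A : O) (B : O) (C : O) (x : Hom A B) (y : Hom B C),
          {f : (Σ A : O, Σ B : O, Hom A B) → ℂ |
            f ⟨A, C, CStarCategory.comp x y⟩ = f ⟨A, B, x⟩ * f ⟨B, C, y⟩}) ∩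
        ((⋂ (A : O), {f : (Σ A : O, Σ B : O, Hom A B) → ℂ | f ⟨A, A, CStarCategory.ident A⟩ = 1}) ∩
        (⋂ (A : O) (B : O) (x : Hom A B),
          {f : (Σ A : O, Σ B : O, Hom A B) → ℂ |
            f ⟨B, A, CStarCategory.star x⟩ = starRingEnd ℂ (f ⟨A, B, x⟩)})))) := by
      ext f
      simp only [Set.mem_range, Set.mem_inter_iff, Set.mem_iInter, Set.mem_setOf_eq]
      constructor
      · rintro ⟨ω, rfl⟩
        exact ⟨fun A B x y => ω.map_add x y, fun A B c x => ω.map_smul c x,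
          fun A B C x y => ω.map_comp x y, fun A => ω.map_ident A, fun A B x => ω.map_star x⟩
      · rintro ⟨h1, h2, h3, h4, h5⟩
        refine ⟨⟨fun {A B} x => f ⟨A, B, x⟩, fun {A B} x y => h1 A B x y,
          fun {A B} c x => h2 A B c x, fun {A B C} x y => h3 A B C x y, h4,
          fun {A B} x => h5 A B x⟩, ?_⟩
        rfl
    rw [hrange]
    refine IsClosed.inter ?_ (IsClosed.inter ?_ (IsClosed.inter ?_ (IsClosed.inter ?_ ?_)))
    · exact isClosed_iInter fun A => isClosed_iInter fun B => isClosed_iInter fun x =>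
        isClosed_iInter fun y => isClosed_eq (continuous_apply _)
          ((continuous_apply (⟨A, B, x⟩ : Σ A : O, Σ B : O, Hom A B)).add
            (continuous_apply (⟨A, B, y⟩ : Σ A : O, Σ B : O, Hom A B)))
    · exact isClosed_iInter fun A => isClosed_iInter fun B => isClosed_iInter fun c =>
        isClosed_iInter fun x => isClosed_eq (continuous_apply _)
          (continuous_const.mul (continuous_apply _))
    · exact isClosed_iInter fun A => isClosed_iInter fun B => isClosed_iInter fun C =>
        isClosed_iInter fun x => isClosed_iInter fun y => isClosed_eq (continuous_apply _)
          ((continuous_apply (⟨A, B, x⟩ : Σ A : O, Σ B : O, Hom A B)).mul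
            (continuous_apply (⟨B, C, y⟩ : Σ A : O, Σ B : O, Hom A B)))
    · exact isClosed_iInter fun A => isClosed_eq (continuous_apply _) continuous_const
    · exact isClosed_iInter fun A => isClosed_iInter fun B => isClosed_iInter fun x =>
        isClosed_eq (continuous_apply _) ((continuous_apply _).star)
  · rintro f ⟨ω, rfl⟩
    intro p _
    simp only [Metric.mem_closedBall, dist_zero_right]
    simpa using ω.abs_toFun_le_norm p.2.2

/-- `[C;ℂ]_{AB}` is a compact set. -/
theorem StarFunctor.isCompact_restrictionSet (A B : O) :
    IsCompact (StarFunctor.restrictionSet O Hom A B) := by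
  have h := StarFunctor.isCompact_range_total (O := O) (Hom := Hom)
  have himg : StarFunctor.restrictionSet O Hom A B =
      (fun f : (Σ A : O, Σ B : O, Hom A B) → ℂ => fun x : Hom A B => f ⟨A, B, x⟩) ''
        Set.range (fun ω : StarFunctor O Hom =>
          fun p : Σ A : O, Σ B : O, Hom A B => ω.toFun p.2.2) := by
    ext φ
    constructor
    · rintro ⟨ω, rfl⟩
      exact ⟨_, ⟨ω, rfl⟩, rfl⟩
    · rintro ⟨f, ⟨ω, rfl⟩, rfl⟩
      exact ⟨ω, rfl⟩
  rw [himg]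
  exact h.image (continuous_pi fun x => continuous_apply _)

/-- `B^C_{AB}` is compact. -/
theorem StarFunctor.compactSpace_BSpace (A B : O) :
    CompactSpace (StarFunctor.BSpace O Hom A B) := by
  haveI : CompactSpace (StarFunctor.restrictionSet O Hom A B) :=
    isCompact_iff_compactSpace.mp (StarFunctor.isCompact_restrictionSet A B)
  constructor
  have h : Set.range (Quot.mk (StarFunctor.phaseRel O Hom A B)) = Set.univ :=
    Set.range_eq_univ.mpr (Quot.mk_surjective)
  rw [← h]
  exact isCompact_range continuous_quot_mk

end Aux2

section Aux3

private theorem StarFunctor.pairMap_sound (A B : O)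
    (φ ψ : StarFunctor.restrictionSet O Hom A B) (h : StarFunctor.phaseRel O Hom A B φ ψ) :
    (fun p : Hom A B × Hom A B =>
        (φ : Hom A B → ℂ) p.1 * starRingEnd ℂ ((φ : Hom A B → ℂ) p.2)) =
      fun p : Hom A B × Hom A B =>
        (ψ : Hom A B → ℂ) p.1 * starRingEnd ℂ ((ψ : Hom A B → ℂ) p.2) := by
  obtain ⟨u, hu, hrel⟩ := h
  funext p
  have h1 : u * starRingEnd ℂ u = 1 := by
    have h2 := Complex.mul_conj u
    rw [Complex.normSq_eq_norm_sq, hu] at h2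
    simpa using h2
  rw [hrel p.1, hrel p.2, map_mul]
  have h3 : u * (φ : Hom A B → ℂ) p.1 * (starRingEnd ℂ u * starRingEnd ℂ ((φ : Hom A B → ℂ) p.2))
      = (u * starRingEnd ℂ u) * ((φ : Hom A B → ℂ) p.1 * starRingEnd ℂ ((φ : Hom A B → ℂ) p.2)) := by
    ring
  rw [h3, h1, one_mul]

/-- The descended "pair-correlation" map on `B^C_{AB}`. -/
private def StarFunctor.pairMap (A B : O) :
    StarFunctor.BSpace O Hom A B → (Hom A B × Hom A B → ℂ) :=
  Quot.lift (fun φ : StarFunctor.restrictionSet O Hom A B =>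
      fun p : Hom A B × Hom A B =>
        (φ : Hom A B → ℂ) p.1 * starRingEnd ℂ ((φ : Hom A B → ℂ) p.2))
    (StarFunctor.pairMap_sound A B)

private theorem StarFunctor.pairMap_continuous (A B : O) :
    Continuous (StarFunctor.pairMap (O := O) (Hom := Hom) A B) := by
  apply continuous_quot_lift
  apply continuous_pi
  intro p
  exact (((continuous_apply p.1).comp continuous_subtype_val).mul
    (((continuous_apply p.2).comp continuous_subtype_val).star))

private theorem StarFunctor.pairMap_injective (A B : O) :
    Function.Injective (StarFunctor.pairMap (O := O) (Hom := Hom) A B) := by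
  intro q1 q2 h
  obtain ⟨φ, rfl⟩ := Quot.exists_rep q1
  obtain ⟨ψ, rfl⟩ := Quot.exists_rep q2
  have hval : ∀ x y : Hom A B,
      (φ : Hom A B → ℂ) x * starRingEnd ℂ ((φ : Hom A B → ℂ) y)
        = (ψ : Hom A B → ℂ) x * starRingEnd ℂ ((ψ : Hom A B → ℂ) y) := by
    intro x y
    exact congrFun h (x, y)
  by_cases hzero : ∀ x : Hom A B, (φ : Hom A B → ℂ) x = 0
  · have hψ : ∀ x : Hom A B, (ψ : Hom A B → ℂ) x = 0 := by
      intro x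
      have h1 := (hval x x).symm
      rw [hzero x, zero_mul, Complex.mul_conj] at h1
      exact Complex.normSq_eq_zero.mp (by exact_mod_cast h1)
    exact Quot.sound ⟨1, by simp, fun x => by rw [hψ x, hzero x, mul_zero]⟩
  · push_neg at hzero
    obtain ⟨x₀, hx0⟩ := hzero
    have hnormsq : (φ : Hom A B → ℂ) x₀ * starRingEnd ℂ ((φ : Hom A B → ℂ) x₀)
        = (ψ : Hom A B → ℂ) x₀ * starRingEnd ℂ ((ψ : Hom A B → ℂ) x₀) := hval x₀ x₀
    have hψ0 : (ψ : Hom A B → ℂ) x₀ ≠ 0 := by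
      intro h0
      apply hx0
      rw [h0, zero_mul, Complex.mul_conj] at hnormsq
      exact Complex.normSq_eq_zero.mp (by exact_mod_cast hnormsq)
    have habs : ‖(φ : Hom A B → ℂ) x₀‖ = ‖(ψ : Hom A B → ℂ) x₀‖ := by
      have h1 := hnormsq
      rw [Complex.mul_conj, Complex.mul_conj] at h1
      have h2 : Complex.normSq ((φ : Hom A B → ℂ) x₀) = Complex.normSq ((ψ : Hom A B → ℂ) x₀) := by
        exact_mod_cast h1
      rw [← Complex.sq_norm, ← Complex.sq_norm] at h2
      have ha := norm_nonneg ((φ : Hom A B → ℂ) x₀)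
      have hb := norm_nonneg ((ψ : Hom A B → ℂ) x₀)
      nlinarith
    refine Quot.sound ⟨(ψ : Hom A B → ℂ) x₀ / (φ : Hom A B → ℂ) x₀, ?_, ?_⟩
    · rw [norm_div, ← habs]
      exact div_self (norm_ne_zero_iff.mpr hx0)
    · intro x
      have hc0 : starRingEnd ℂ ((φ : Hom A B → ℂ) x₀) ≠ 0 := by
        simpa using hx0
      have key : ((ψ : Hom A B → ℂ) x * (φ : Hom A B → ℂ) x₀) * starRingEnd ℂ ((φ : Hom A B → ℂ) x₀)
          = ((ψ : Hom A B → ℂ) x₀ * (φ : Hom A B → ℂ) x) * starRingEnd ℂ ((φ : Hom A B → ℂ) x₀) := by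
        calc ((ψ : Hom A B → ℂ) x * (φ : Hom A B → ℂ) x₀) * starRingEnd ℂ ((φ : Hom A B → ℂ) x₀)
            = (ψ : Hom A B → ℂ) x * ((φ : Hom A B → ℂ) x₀ * starRingEnd ℂ ((φ : Hom A B → ℂ) x₀)) := by
              ring
          _ = (ψ : Hom A B → ℂ) x * ((ψ : Hom A B → ℂ) x₀ * starRingEnd ℂ ((ψ : Hom A B → ℂ) x₀)) := by
              rw [hnormsq]
          _ = (ψ : Hom A B → ℂ) x₀ * ((ψ : Hom A B → ℂ) x * starRingEnd ℂ ((ψ : Hom A B → ℂ) x₀)) := by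
              ring
          _ = (ψ : Hom A B → ℂ) x₀ * ((φ : Hom A B → ℂ) x * starRingEnd ℂ ((φ : Hom A B → ℂ) x₀)) := by
              rw [← hval x x₀]
          _ = ((ψ : Hom A B → ℂ) x₀ * (φ : Hom A B → ℂ) x) * starRingEnd ℂ ((φ : Hom A B → ℂ) x₀) := by
              ring
      have key2 := mul_right_cancel₀ hc0 key
      rw [div_mul_eq_mul_div, eq_div_iff hx0]
      linear_combination key2

private theorem StarFunctor.t2Space_BSpace (A B : O) :
    T2Space (StarFunctor.BSpace O Hom A B) :=
  T2Space.of_injective_continuous (StarFunctor.pairMap_injective A B)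
    (StarFunctor.pairMap_continuous A B)

private theorem StarFunctor.zeroClasses_subsingleton (A B : O) :
    (StarFunctor.zeroClasses O Hom A B).Subsingleton := by
  rintro q1 ⟨φ, rfl, hφ⟩ q2 ⟨ψ, rfl, hψ⟩
  exact Quot.sound ⟨1, by simp, fun x => by rw [hψ x, hφ x, mul_zero]⟩

/-- An open subset of a normal T1 space is completely regular. -/
private theorem completelyRegularSpace_of_isOpen {Y : Type*} [TopologicalSpace Y]
    [NormalSpace Y] [T1Space Y] {s : Set Y} (hs : IsOpen s) :
    CompletelyRegularSpace s := by
  constructor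
  intro x K hK hx
  have hKc : IsClosed (closure (Subtype.val '' K) ∪ sᶜ) :=
    isClosed_closure.union hs.isClosed_compl
  have hxK : (x : Y) ∉ closure (Subtype.val '' K) ∪ sᶜ := by
    rintro (h | h)
    · exact hx (hK.closure_eq ▸ closure_subtype.mpr h)
    · exact h x.2
  obtain ⟨f, hf0, hf1, hficc⟩ := exists_continuous_zero_one_of_isClosed
    (isClosed_singleton (x := (x : Y))) hKc
    (Set.disjoint_singleton_left.mpr hxK)
  refine ⟨fun y => ⟨f y, hficc y⟩, ?_, ?_, ?_⟩
  · exact (f.continuous.comp continuous_subtype_val).subtype_mk _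
  · exact Subtype.ext (hf0 rfl)
  · intro k hk
    exact Subtype.ext (hf1 (Set.mem_union_left _ (subset_closure ⟨k, hk, rfl⟩)))

end Aux3

/-- In `B^C_{AB}` the set of classes of identically vanishing restrictions is
empty or a single point and closed; hence `X^C_{AB}` is open in `B^C_{AB}` and is a locally
compact Hausdorff completely regular space.  If some `ω ∈ [C;ℂ]` vanishes identically on
`C_{AB}` then `B^C_{AB}` is homeomorphic to the one-point (Alexandroff) compactification of
`X^C_{AB}`. -/
theorem StarFunctor.zeroClasses_and_XSpace_properties
    (hcomm : CStarCategory.IsCommutative O Hom) (A B : O) :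
    (StarFunctor.zeroClasses O Hom A B).Subsingleton ∧
    IsClosed (StarFunctor.zeroClasses O Hom A B) ∧
    IsOpen (StarFunctor.zeroClasses O Hom A B)ᶜ ∧
    LocallyCompactSpace ((StarFunctor.zeroClasses O Hom A B)ᶜ : Set (StarFunctor.BSpace O Hom A B)) ∧
    T2Space ((StarFunctor.zeroClasses O Hom A B)ᶜ : Set (StarFunctor.BSpace O Hom A B)) ∧
    CompletelyRegularSpace ((StarFunctor.zeroClasses O Hom A B)ᶜ : Set (StarFunctor.BSpace O Hom A B)) ∧
    ((∃ ω : StarFunctor O Hom, ∀ x : Hom A B, ω.toFun x = 0) →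
      Nonempty (StarFunctor.BSpace O Hom A B ≃ₜ
        OnePoint ((StarFunctor.zeroClasses O Hom A B)ᶜ : Set (StarFunctor.BSpace O Hom A B)))) := by
  classical
  haveI hT2 : T2Space (StarFunctor.BSpace O Hom A B) := StarFunctor.t2Space_BSpace A B
  haveI hCS : CompactSpace (StarFunctor.BSpace O Hom A B) := StarFunctor.compactSpace_BSpace A B
  haveI hN : NormalSpace (StarFunctor.BSpace O Hom A B) := inferInstance
  haveI hLCB : LocallyCompactSpace (StarFunctor.BSpace O Hom A B) := inferInstance
  have hsub := StarFunctor.zeroClasses_subsingleton (O := O) (Hom := Hom) A B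
  have hclosed : IsClosed (StarFunctor.zeroClasses O Hom A B) := hsub.isClosed
  have hopen : IsOpen (StarFunctor.zeroClasses O Hom A B)ᶜ := hclosed.isOpen_compl
  haveI hLC : LocallyCompactSpace
      ((StarFunctor.zeroClasses O Hom A B)ᶜ : Set (StarFunctor.BSpace O Hom A B)) :=
    hopen.locallyCompactSpace
  haveI hT2s : T2Space
      ((StarFunctor.zeroClasses O Hom A B)ᶜ : Set (StarFunctor.BSpace O Hom A B)) := inferInstance
  haveI hCR : CompletelyRegularSpace
      ((StarFunctor.zeroClasses O Hom A B)ᶜ : Set (StarFunctor.BSpace O Hom A B)) :=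
    completelyRegularSpace_of_isOpen hopen
  refine ⟨hsub, hclosed, hopen, hLC, hT2s, hCR, ?_⟩
  rintro ⟨ω, hω⟩
  set Z := StarFunctor.zeroClasses O Hom A B with hZdef
  let φ0 : StarFunctor.restrictionSet O Hom A B := ⟨fun x => ω.toFun x, ⟨ω, rfl⟩⟩
  let z0 : StarFunctor.BSpace O Hom A B := Quot.mk _ φ0
  have hz0 : z0 ∈ Z := ⟨φ0, rfl, hω⟩
  have hZ1 : Z = {z0} := hsub.eq_singleton_of_mem hz0
  -- The equivalence
  let F : StarFunctor.BSpace O Hom A B → OnePoint ↥(Zᶜ) := fun q =>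
    if h : q ∈ Z then OnePoint.infty else ((⟨q, h⟩ : ↥(Zᶜ)) : OnePoint ↥(Zᶜ))
  let G : OnePoint ↥(Zᶜ) → StarFunctor.BSpace O Hom A B := fun o => o.elim z0 Subtype.val
  have hGF : ∀ q, G (F q) = q := by
    intro q
    by_cases h : q ∈ Z
    · have hq : q = z0 := by rw [hZ1] at h; exact h
      simp only [F, dif_pos h, G, OnePoint.elim_infty]
      exact hq.symm
    · simp only [F, dif_neg h, G]
      rfl
  have hFG : ∀ o, F (G o) = o := by
    intro o
    induction o using OnePoint.rec with
    | infty =>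
      simp only [G, OnePoint.elim_infty, F, dif_pos hz0]
    | coe x =>
      have hx : (x : ↥(Zᶜ)).val ∉ Z := x.2
      simp only [G, OnePoint.elim_some, F, dif_neg hx]
  let E : StarFunctor.BSpace O Hom A B ≃ OnePoint ↥(Zᶜ) :=
    { toFun := F, invFun := G, left_inv := hGF, right_inv := hFG }
  -- T2 of the one-point compactification
  haveI : T1Space (OnePoint ↥(Zᶜ)) := inferInstance
  haveI : NormalSpace (OnePoint ↥(Zᶜ)) := inferInstance
  haveI : T4Space (OnePoint ↥(Zᶜ)) := inferInstance
  -- Continuity of F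
  have hFcont : Continuous F := by
    rw [continuous_def]
    intro s hs
    rw [OnePoint.isOpen_def] at hs
    obtain ⟨hsc, hsU⟩ := hs
    by_cases hinf : OnePoint.infty ∈ s
    · -- preimage is the complement of the (compact) image of `Uᶜ`
      have hK : IsCompact ((fun x : ↥(Zᶜ) => (x : OnePoint ↥(Zᶜ))) ⁻¹' s)ᶜ := hsc hinf
      have hKimg : IsCompact (Subtype.val ''
          (((fun x : ↥(Zᶜ) => (x : OnePoint ↥(Zᶜ))) ⁻¹' s)ᶜ)) :=
        hK.image continuous_subtype_val
      have heq : F ⁻¹' s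
          = (Subtype.val '' (((fun x : ↥(Zᶜ) => (x : OnePoint ↥(Zᶜ))) ⁻¹' s)ᶜ))ᶜ := by
        ext q
        simp only [Set.mem_preimage, Set.mem_compl_iff, Set.mem_image, not_exists]
        by_cases h : q ∈ Z
        · simp only [F, dif_pos h]
          constructor
          · intro _ y hy
            exact y.2 (by rw [hy.2]; exact h)
          · intro _
            exact hinf
        · simp only [F, dif_neg h]
          constructor
          · intro hmem y hy
            exact hy.1 (by rw [show y = ⟨q, h⟩ from Subtype.ext hy.2]; exact hmem)
          · intro hq
            by_contra hns
            exact hq ⟨q, h⟩ ⟨hns, rfl⟩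
      rw [heq]
      exact hKimg.isClosed.isOpen_compl
    · -- preimage is the open image of `U` under the open embedding `val`
      have heq : F ⁻¹' s
          = Subtype.val '' ((fun x : ↥(Zᶜ) => (x : OnePoint ↥(Zᶜ))) ⁻¹' s) := by
        ext q
        simp only [Set.mem_preimage, Set.mem_image]
        by_cases h : q ∈ Z
        · simp only [F, dif_pos h]
          constructor
          · intro hmem; exact absurd hmem hinf
          · rintro ⟨y, hy, rfl⟩
            exact absurd h y.2
        · simp only [F, dif_neg h]
          constructor
          · intro hmem
            exact ⟨⟨q, h⟩, hmem, rfl⟩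
          · rintro ⟨y, hy, rfl⟩
            rw [show (⟨(y : StarFunctor.BSpace O Hom A B), h⟩ : ↥(Zᶜ)) = y from Subtype.ext rfl]
            exact hy
      rw [heq]
      exact hopen.isOpenMap_subtype_val _ hsU
  exact ⟨Continuous.homeoOfEquivCompactToT2 (f := E) hFcont⟩
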